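/- arXiv:2301.08005 — 3 statements merged into one kernel-verified Lean document; each statement's English description precedes it below -/
import Mathlib

section
/- Let L > 0 and let c: ℤ³ → ℂ satisfy Σ_{n ∈ ℤ³} |c_n| < ∞. Define γ: ℝ³ → ℂ by γ(x) = Σ_{n ∈ ℤ³} c_n e^{i (2π/L) n·x}. Then for every integer p ≥ 1 and all points z₁, …, z_p ∈ ℝ³, one has |det[ γ(z_i − z_j) ]_{1≤i,j≤p}| ≤ ( Σ_{n ∈ ℤ³} |c_n| )^p. -/
open MeasureTheory

noncomputable section


noncomputable section
open Matrix Complex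
open scoped ComplexOrder

/-- AM-GM: product of nonneg reals ≤ (sum/p)^p. -/
lemma amgm {p : ℕ} (hp : 0 < p) (lam : Fin p → ℝ) (hlam : ∀ i, 0 ≤ lam i) :
    ∏ i, lam i ≤ ((∑ i, lam i) / p) ^ p := by
  have hw : ∑ _i : Fin p, (p : ℝ)⁻¹ = 1 := by
    simp [Finset.sum_const, Finset.card_univ]
    field_simp
  have h1 : ∏ i, lam i ^ ((p : ℝ)⁻¹) ≤ ∑ i, (p : ℝ)⁻¹ * lam i :=
    Real.geom_mean_le_arith_mean_weighted Finset.univ _ _ (fun i _ => by positivity) hw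
      (fun i _ => hlam i)
  have h2 : ∑ i, (p : ℝ)⁻¹ * lam i = (∑ i, lam i) / p := by
    rw [← Finset.mul_sum]; ring
  have h3 : (∏ i, lam i ^ ((p : ℝ)⁻¹)) ^ p = ∏ i, lam i := by
    rw [← Finset.prod_pow]
    congr 1; funext i
    rw [← Real.rpow_natCast (lam i ^ ((p:ℝ)⁻¹)) p, ← Real.rpow_mul (hlam i),
      inv_mul_cancel₀ (by exact_mod_cast hp.ne' : (p : ℝ) ≠ 0), Real.rpow_one]
  calc ∏ i, lam i = (∏ i, lam i ^ ((p : ℝ)⁻¹)) ^ p := h3.symm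
    _ ≤ ((∑ i, lam i) / p) ^ p := by
        apply pow_le_pow_left₀ (Finset.prod_nonneg fun i _ => Real.rpow_nonneg (hlam i) _)
        rw [← h2]; exact h1

end

noncomputable section
open Matrix Complex
open scoped ComplexOrder

lemma trace_eq_sum_eigs {p : ℕ} {A : Matrix (Fin p) (Fin p) ℂ} (hH : A.IsHermitian) :
    A.trace = ((∑ i, hH.eigenvalues i : ℝ) : ℂ) := by
  conv_lhs => rw [hH.spectral_theorem]
  rw [Unitary.conjStarAlgAut_apply, Matrix.trace_mul_cycle, Matrix.mem_unitaryGroup_iff'.mp hH.eigenvectorUnitary.2, one_mul,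
    Matrix.trace_diagonal]
  push_cast
  rfl

lemma psd_det_le {p : ℕ} (hp : 0 < p) {A : Matrix (Fin p) (Fin p) ℂ} (hA : A.PosSemidef)
    {S : ℝ} (htr : A.trace.re ≤ p * S) : ‖A.det‖ ≤ S ^ p := by
  have hH := hA.1
  have hnn : ∀ i, 0 ≤ hH.eigenvalues i := hA.eigenvalues_nonneg
  have htrace : A.trace.re = ∑ i, hH.eigenvalues i := by
    rw [trace_eq_sum_eigs hH, Complex.ofReal_re]
  have hdet : ‖A.det‖ = ∏ i, hH.eigenvalues i := by
    rw [hH.det_eq_prod_eigenvalues, norm_prod]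
    congr 1; funext i
    rw [RCLike.norm_ofReal, _root_.abs_of_nonneg (hnn i)]
  rw [hdet]
  have hsum : ∑ i, hH.eigenvalues i ≤ p * S := htrace ▸ htr
  have hS : 0 ≤ S := by
    nlinarith [Finset.sum_nonneg (fun i (_ : i ∈ Finset.univ) => hnn i), (Nat.cast_pos (α := ℝ)).mpr hp]
  calc ∏ i, hH.eigenvalues i ≤ ((∑ i, hH.eigenvalues i) / p) ^ p := amgm hp _ hnn
    _ ≤ S ^ p := by
        apply pow_le_pow_left₀ (div_nonneg (Finset.sum_nonneg fun i _ => hnn i) (Nat.cast_nonneg p))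
        rw [div_le_iff₀ (by exact_mod_cast hp : (0:ℝ) < p)]
        linarith [hsum]

end

noncomputable section
open Matrix Complex
open scoped ComplexOrder

lemma trace_self_mul_conjTranspose_re {k m : Type*} [Fintype k] [Fintype m]
    (N : Matrix k m ℂ) :
    (N * Nᴴ).trace.re = ∑ i, ∑ n, Complex.normSq (N i n) := by
  rw [Matrix.trace]
  rw [Complex.re_sum]
  congr 1; funext i
  rw [Matrix.diag_apply, Matrix.mul_apply, Complex.re_sum]
  congr 1; funext n
  rw [Matrix.conjTranspose_apply, Complex.star_def, Complex.mul_conj, Complex.ofReal_re]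

end

noncomputable section
open Matrix Complex
open scoped ComplexOrder

lemma gram_det_le {p : ℕ} (hp : 0 < p) {m : Type*} [Fintype m] [DecidableEq m]
    (X Y : Matrix (Fin p) m ℂ) {S : ℝ}
    (hX : ∑ i, ∑ n, Complex.normSq (X i n) ≤ p * S)
    (hY : ∑ i, ∑ n, Complex.normSq (Y i n) ≤ p * S) :
    ‖(X * Yᴴ).det‖ ≤ S ^ p := by
  have hS : 0 ≤ S := by
    have h0 : (0:ℝ) ≤ ∑ i, ∑ n, Complex.normSq (X i n) :=
      Finset.sum_nonneg fun i _ => Finset.sum_nonneg fun n _ => Complex.normSq_nonneg _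
    nlinarith [(Nat.cast_pos (α := ℝ)).mpr hp]
  have hG : (Y * Yᴴ).PosSemidef := posSemidef_self_mul_conjTranspose Y
  have hGtr : (Y * Yᴴ).trace.re ≤ p * S := by
    rw [trace_self_mul_conjTranspose_re]; exact hY
  have hGdet : ‖(Y * Yᴴ).det‖ ≤ S ^ p := psd_det_le hp hG hGtr
  by_cases hdet : (Y * Yᴴ).det = 0
  · obtain ⟨v, hv, hGv⟩ := (Matrix.exists_mulVec_eq_zero_iff).mpr hdet
    have hw : Yᴴ *ᵥ v = 0 := by
      apply dotProduct_star_self_eq_zero.mp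
      rw [Matrix.star_mulVec, Matrix.conjTranspose_conjTranspose, ← Matrix.dotProduct_mulVec,
        Matrix.mulVec_mulVec, hGv, dotProduct_zero]
    have hMv : (X * Yᴴ) *ᵥ v = 0 := by
      rw [← Matrix.mulVec_mulVec, hw, Matrix.mulVec_zero]
    have : (X * Yᴴ).det = 0 := Matrix.exists_mulVec_eq_zero_iff.mp ⟨v, hv, hMv⟩
    rw [this, norm_zero]; positivity
  · set R := (open scoped MatrixOrder in CFC.sqrt (Y * Yᴴ)) with hRdef
    have hRH : Rᴴ = R := (open scoped MatrixOrder in (CFC.sqrt_nonneg (Y * Yᴴ)).posSemidef.1)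
    have hRR : R * R = Y * Yᴴ := (open scoped MatrixOrder in CFC.sqrt_mul_sqrt_self _ hG.nonneg)
    have hRdet : R.det ≠ 0 := by
      intro h
      apply hdet
      rw [← hRR, Matrix.det_mul, h, mul_zero]
    have hRunit : IsUnit R.det := Ne.isUnit hRdet
    have hinv1 : R * R⁻¹ = 1 := Matrix.mul_nonsing_inv R hRunit
    have hinv2 : R⁻¹ * R = 1 := Matrix.nonsing_inv_mul R hRunit
    have hRinvH : (R⁻¹)ᴴ = R⁻¹ := by rw [Matrix.conjTranspose_nonsing_inv, hRH]
    obtain ⟨Z, hZdef⟩ : ∃ Z, Z = R⁻¹ * Y := ⟨_, rfl⟩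
    have hZZ : Z * Zᴴ = 1 := by
      rw [hZdef, Matrix.conjTranspose_mul, hRinvH]
      calc R⁻¹ * Y * (Yᴴ * R⁻¹) = R⁻¹ * (Y * Yᴴ) * R⁻¹ := by
            rw [Matrix.mul_assoc, Matrix.mul_assoc, Matrix.mul_assoc]
        _ = R⁻¹ * (R * R) * R⁻¹ := by rw [hRR]
        _ = (R⁻¹ * R) * (R * R⁻¹) := by rw [Matrix.mul_assoc, Matrix.mul_assoc, Matrix.mul_assoc]
        _ = 1 := by rw [hinv1, hinv2, Matrix.one_mul]
    have hYRZ : Y = R * Z := by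
      rw [hZdef, ← Matrix.mul_assoc, hinv1, Matrix.one_mul]
    have hfact : X * Yᴴ = (X * Zᴴ) * R := by
      rw [hYRZ, Matrix.conjTranspose_mul, hRH, ← Matrix.mul_assoc]
    -- the projected Gram matrix
    obtain ⟨A, hAdef⟩ : ∃ A, A = X * Zᴴ * Z * Xᴴ := ⟨_, rfl⟩
    have hA1 : A = (X * Zᴴ) * (X * Zᴴ)ᴴ := by
      rw [Matrix.conjTranspose_mul, Matrix.conjTranspose_conjTranspose, hAdef, Matrix.mul_assoc]
    have hApsd : A.PosSemidef := by rw [hA1]; exact posSemidef_self_mul_conjTranspose _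
    obtain ⟨N, hNdef⟩ : ∃ N, N = X * Zᴴ * Z := ⟨_, rfl⟩
    have hNX : N * Xᴴ = A := by rw [hNdef, hAdef]
    have hXN : X * Nᴴ = A := by
      rw [hNdef, hAdef, Matrix.conjTranspose_mul, Matrix.conjTranspose_mul,
        Matrix.conjTranspose_conjTranspose]
      simp only [Matrix.mul_assoc]
    have hNN : N * Nᴴ = A := by
      rw [hNdef, Matrix.conjTranspose_mul, Matrix.conjTranspose_mul,
        Matrix.conjTranspose_conjTranspose]
      calc X * Zᴴ * Z * (Zᴴ * (Z * Xᴴ)) = X * Zᴴ * (Z * Zᴴ) * (Z * Xᴴ) := by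
            simp only [Matrix.mul_assoc]
        _ = X * Zᴴ * (Z * Xᴴ) := by rw [hZZ, Matrix.mul_one]
        _ = X * Zᴴ * Z * Xᴴ := by simp only [Matrix.mul_assoc]
        _ = A := hAdef.symm
    have hsplit : X * Xᴴ = A + (X - N) * (X - N)ᴴ := by
      rw [Matrix.conjTranspose_sub, Matrix.sub_mul, Matrix.mul_sub, Matrix.mul_sub,
        hXN, hNX, hNN]
      abel
    have htrA : A.trace.re ≤ p * S := by
      have h1 : (X * Xᴴ).trace.re = A.trace.re + ((X - N) * (X - N)ᴴ).trace.re := by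
        rw [hsplit, Matrix.trace_add, Complex.add_re]
      have h2 : 0 ≤ ((X - N) * (X - N)ᴴ).trace.re := by
        rw [trace_self_mul_conjTranspose_re]
        exact Finset.sum_nonneg fun i _ => Finset.sum_nonneg fun n _ => Complex.normSq_nonneg _
      have h3 : (X * Xᴴ).trace.re ≤ p * S := by
        rw [trace_self_mul_conjTranspose_re]; exact hX
      linarith
    have hAdet : ‖A.det‖ ≤ S ^ p := psd_det_le hp hApsd htrA
    have hAdet2 : ‖A.det‖ = ‖(X * Zᴴ).det‖ ^ 2 := by
      rw [hA1, Matrix.det_mul, Matrix.det_conjTranspose, norm_mul, norm_star, sq]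
    have hGdet2 : ‖(Y * Yᴴ).det‖ = ‖R.det‖ ^ 2 := by
      rw [← hRR, Matrix.det_mul, norm_mul, sq]
    have hfinal : ‖(X * Yᴴ).det‖ ^ 2 ≤ (S ^ p) ^ 2 := by
      rw [hfact, Matrix.det_mul, norm_mul, mul_pow, sq (S ^ p)]
      exact mul_le_mul (hAdet2 ▸ hAdet) (hGdet2 ▸ hGdet) (by positivity) (by positivity)
    exact le_of_pow_le_pow_left₀ two_ne_zero (by positivity) hfinal

end

noncomputable section
open Matrix Complex

lemma star_exp_real_mul_I (t : ℝ) :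
    star (Complex.exp ((t : ℂ) * Complex.I)) = Complex.exp (((-t : ℝ) : ℂ) * Complex.I) := by
  rw [Complex.star_def, ← Complex.exp_conj, _root_.map_mul, Complex.conj_ofReal, Complex.conj_I,
    Complex.ofReal_neg]
  ring_nf

lemma exp_real_mul_I_add (s t : ℝ) :
    Complex.exp ((s : ℂ) * Complex.I) * Complex.exp ((t : ℂ) * Complex.I)
      = Complex.exp (((s + t : ℝ) : ℂ) * Complex.I) := by
  rw [← Complex.exp_add, ← add_mul, ← Complex.ofReal_add]

lemma normSq_exp_real_mul_I (t : ℝ) :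
    Complex.normSq (Complex.exp ((t : ℂ) * Complex.I)) = 1 := by
  rw [← Complex.sq_norm, Complex.norm_exp_ofReal_mul_I, one_pow]

lemma key_entry (cn : ℂ) (a b : ℝ) :
    ((Real.sqrt ‖cn‖ : ℂ) * Complex.exp (((Complex.arg cn / 2 : ℝ) : ℂ) * Complex.I) *
        Complex.exp ((a : ℂ) * Complex.I)) *
      star ((Real.sqrt ‖cn‖ : ℂ) * Complex.exp (((-(Complex.arg cn / 2) : ℝ) : ℂ) * Complex.I) *
        Complex.exp ((b : ℂ) * Complex.I)) =
    cn * Complex.exp (((a - b : ℝ) : ℂ) * Complex.I) := by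
  rw [star_mul', star_mul', star_exp_real_mul_I, star_exp_real_mul_I, Complex.star_def,
    Complex.conj_ofReal, neg_neg]
  trans ((Real.sqrt ‖cn‖ : ℂ) * (Real.sqrt ‖cn‖ : ℂ)) *
        ((Complex.exp (((Complex.arg cn / 2 : ℝ) : ℂ) * Complex.I) *
          Complex.exp (((Complex.arg cn / 2 : ℝ) : ℂ) * Complex.I)) *
         (Complex.exp ((a : ℂ) * Complex.I) * Complex.exp (((-b : ℝ) : ℂ) * Complex.I)))
  · ring
  rw [← Complex.ofReal_mul, Real.mul_self_sqrt (norm_nonneg cn),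
    exp_real_mul_I_add, exp_real_mul_I_add, add_halves]
  have hab : a + -b = a - b := by ring
  rw [hab, ← mul_assoc]
  congr 1
  exact Complex.norm_mul_exp_arg_mul_I cn

end

noncomputable section
open MeasureTheory Filter Topology Matrix Complex


/-- The `L`-periodic function `γ(x) = Σ_{n ∈ ℤ³} c_n e^{i(2π/L) n·x}`. -/
def periodicFn (L : ℝ) (c : (Fin 3 → ℤ) → ℂ) (x : Fin 3 → ℝ) : ℂ :=
  ∑' n : Fin 3 → ℤ, c n *
    Complex.exp (Complex.I * (((2 * Real.pi / L) * ∑ m : Fin 3, (n m : ℝ) * x m : ℝ) : ℂ))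

/-- Gram–Hadamard bound: if `γ` has absolutely summable Fourier coefficients
`c`, then `|det[γ(z_i − z_j)]_{1≤i,j≤p}| ≤ (Σ_n |c_n|)^p` for all `p ≥ 1` and all points
`z₁,…,z_p ∈ ℝ³`. -/
theorem det_periodicFn_bound
    (L : ℝ) (hL : 0 < L) (c : (Fin 3 → ℤ) → ℂ)
    (hc : Summable fun n => ‖c n‖) :
    ∀ p : ℕ, 1 ≤ p → ∀ z : Fin p → (Fin 3 → ℝ),
      ‖Matrix.det (Matrix.of fun i j : Fin p => periodicFn L c (z i - z j))‖
        ≤ (∑' n : Fin 3 → ℤ, ‖c n‖) ^ p := by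
  intro p hp z
  classical
  have hp0 : 0 < p := hp
  set θ : ℝ := 2 * Real.pi / L with hθdef
  set S : ℝ := ∑' n : Fin 3 → ℤ, ‖c n‖ with hSdef
  set f : Fin p → Fin p → (Fin 3 → ℤ) → ℂ := fun i j n => c n *
    Complex.exp (Complex.I * ((θ * ∑ m : Fin 3, (n m : ℝ) * (z i - z j) m : ℝ) : ℂ)) with hfdef
  have hnorm : ∀ i j n, ‖f i j n‖ = ‖c n‖ := by
    intro i j n
    rw [hfdef]
    simp only [norm_mul, Complex.norm_exp]
    have : (Complex.I * ((θ * ∑ m : Fin 3, (n m : ℝ) * (z i - z j) m : ℝ) : ℂ)).re = 0 := by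
      simp [Complex.mul_re]
    rw [this, Real.exp_zero, mul_one]
  have hsumm : ∀ i j, Summable (f i j) :=
    fun i j => Summable.of_norm (hc.congr fun n => (hnorm i j n).symm)
  have hhas : ∀ i j, HasSum (f i j) (periodicFn L c (z i - z j)) :=
    fun i j => (hsumm i j).hasSum
  have hcont : Continuous (fun A : Matrix (Fin p) (Fin p) ℂ => A.det) :=
    continuous_id.matrix_det
  have hdettend : Tendsto
      (fun F : Finset (Fin 3 → ℤ) => ‖(Matrix.of fun i j : Fin p => ∑ n ∈ F, f i j n).det‖)
      atTop (𝓝 ‖(Matrix.of fun i j : Fin p => periodicFn L c (z i - z j)).det‖) := by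
    apply Filter.Tendsto.norm
    refine (hcont.tendsto _).comp ?_
    apply tendsto_pi_nhds.mpr
    intro i
    rw [tendsto_pi_nhds]
    intro j
    exact hhas i j
  refine le_of_tendsto hdettend (Filter.Eventually.of_forall ?_)
  intro F
  set X : Matrix (Fin p) {n // n ∈ F} ℂ := Matrix.of fun i n =>
    (Real.sqrt ‖c n.1‖ : ℂ) * Complex.exp (((Complex.arg (c n.1) / 2 : ℝ) : ℂ) * Complex.I) *
      Complex.exp (((θ * ∑ m : Fin 3, (n.1 m : ℝ) * z i m : ℝ) : ℂ) * Complex.I) with hXdef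
  set Y : Matrix (Fin p) {n // n ∈ F} ℂ := Matrix.of fun j n =>
    (Real.sqrt ‖c n.1‖ : ℂ) * Complex.exp (((-(Complex.arg (c n.1) / 2) : ℝ) : ℂ) * Complex.I) *
      Complex.exp (((θ * ∑ m : Fin 3, (n.1 m : ℝ) * z j m : ℝ) : ℂ) * Complex.I) with hYdef
  have hMF : (Matrix.of fun i j : Fin p => ∑ n ∈ F, f i j n) = X * Yᴴ := by
    ext i j
    rw [Matrix.of_apply, Matrix.mul_apply, ← Finset.sum_coe_sort F (f i j)]
    congr 1
    funext n
    rw [Matrix.conjTranspose_apply, hXdef, hYdef, Matrix.of_apply, Matrix.of_apply, key_entry]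
    rw [hfdef]
    have harg : (θ * ∑ m : Fin 3, (n.1 m : ℝ) * z i m) - (θ * ∑ m : Fin 3, (n.1 m : ℝ) * z j m)
        = θ * ∑ m : Fin 3, (n.1 m : ℝ) * (z i - z j) m := by
      rw [← mul_sub, ← Finset.sum_sub_distrib]
      congr 1
      congr 1
      funext m
      simp [Pi.sub_apply, mul_sub]
    rw [harg]
    ring
  have hnsq : ∀ (i : Fin p) (n : {n // n ∈ F}),
      Complex.normSq (X i n) = ‖c n.1‖ ∧ Complex.normSq (Y i n) = ‖c n.1‖ := by
    intro i n
    constructor <;>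
    · simp only [hXdef, hYdef, Matrix.of_apply, _root_.map_mul, Complex.normSq_ofReal,
        normSq_exp_real_mul_I, mul_one]
      rw [Real.mul_self_sqrt (norm_nonneg _)]
  have htr : ∀ M : Matrix (Fin p) {n // n ∈ F} ℂ,
      (∀ i n, Complex.normSq (M i n) = ‖c n.1‖) →
      ∑ i, ∑ n, Complex.normSq (M i n) ≤ p * S := by
    intro M hM
    have h1 : ∑ i : Fin p, ∑ n : {n // n ∈ F}, Complex.normSq (M i n)
        = p * ∑ n ∈ F, ‖c n‖ := by
      calc ∑ i : Fin p, ∑ n : {n // n ∈ F}, Complex.normSq (M i n)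
          = ∑ _i : Fin p, ∑ n ∈ F, ‖c n‖ := by
            refine Finset.sum_congr rfl fun i _ => ?_
            rw [show ∑ n : {n // n ∈ F}, Complex.normSq (M i n)
                  = ∑ n : {n // n ∈ F}, ‖c n.1‖ from Finset.sum_congr rfl fun n _ => hM i n,
              Finset.sum_coe_sort F fun n => ‖c n‖]
        _ = p * ∑ n ∈ F, ‖c n‖ := by
            rw [Finset.sum_const, Finset.card_univ, Fintype.card_fin, nsmul_eq_mul]
    rw [h1]
    have h2 : ∑ n ∈ F, ‖c n‖ ≤ S := hc.sum_le_tsum F (fun n _ => norm_nonneg _)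
    exact mul_le_mul_of_nonneg_left h2 (Nat.cast_nonneg p)
  rw [hMF]
  exact gram_det_le hp0 X Y (htr X fun i n => (hnsq i n).1) (htr Y fun i n => (hnsq i n).2)

end

end
end

section
/- There exists a universal constant C > 0 such that the following holds. Let a, b > 0 with 2a ≤ b, and let f: [0, b] → ℝ be continuously differentiable with f ≥ 0, f(b) = 1, and f(r) ≥ (1 − a/r)/(1 − a/b) for all r ∈ [a, b]. Then ∫₀^b r² f(r) f'(r) dr ≤ C a b. -/
open MeasureTheory intervalIntegral

/-- There is a universal constant `C > 0` such that for all `0 < a`,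
`0 < b` with `2a ≤ b` and every continuously differentiable `f : [0,b] → ℝ` (with derivative
`f'`) satisfying `f ≥ 0`, `f(b) = 1` and `f(r) ≥ (1 − a/r)/(1 − a/b)` on `[a,b]`, one has
`∫₀^b r² f(r) f'(r) dr ≤ C a b`. -/
theorem radial_integral_f_deriv_le_s_wave :
    ∃ C > (0 : ℝ), ∀ (a b : ℝ) (f f' : ℝ → ℝ),
      0 < a → 0 < b → 2 * a ≤ b →
      (∀ r ∈ Set.Icc (0 : ℝ) b, HasDerivAt f (f' r) r) →
      ContinuousOn f' (Set.Icc (0 : ℝ) b) →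
      (∀ r ∈ Set.Icc (0 : ℝ) b, 0 ≤ f r) →
      f b = 1 →
      (∀ r ∈ Set.Icc a b, (1 - a / r) / (1 - a / b) ≤ f r) →
      (∫ r in (0 : ℝ)..b, r ^ 2 * f r * f' r) ≤ C * a * b := by
  refine ⟨3, by norm_num, ?_⟩
  intro a b f f' ha hb hab hderiv hcont hpos hfb hlow
  have hab' : a ≤ b := by linarith
  have h0b : (0 : ℝ) ≤ b := hb.le
  have huIcc : Set.uIcc (0 : ℝ) b = Set.Icc 0 b := Set.uIcc_of_le h0b
  have hfc : ContinuousOn f (Set.Icc 0 b) := fun r hr =>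
    (hderiv r hr).continuousAt.continuousWithinAt
  -- integration by parts
  have hv : ∀ r ∈ Set.uIcc (0 : ℝ) b,
      HasDerivAt (fun x => f x ^ 2 / 2) (f r * f' r) r := by
    intro r hr
    rw [huIcc] at hr
    have := ((hderiv r hr).fun_pow 2).div_const 2
    refine this.congr_deriv ?_
    ring
  have hu : ∀ r ∈ Set.uIcc (0 : ℝ) b, HasDerivAt (fun x : ℝ => x ^ 2) (2 * r) r := by
    intro r _
    simpa [mul_comm] using hasDerivAt_pow 2 r
  have hint1 : IntervalIntegrable (fun r : ℝ => 2 * r) volume 0 b :=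
    (continuous_const.mul continuous_id).intervalIntegrable 0 b
  have hint2 : IntervalIntegrable (fun r => f r * f' r) volume 0 b := by
    apply ContinuousOn.intervalIntegrable
    rw [huIcc]; exact hfc.mul hcont
  have hibp := intervalIntegral.integral_mul_deriv_eq_deriv_mul hu hv hint1 hint2
  have hlhs : (∫ r in (0 : ℝ)..b, r ^ 2 * f r * f' r)
      = ∫ r in (0 : ℝ)..b, (fun x : ℝ => x ^ 2) r * (f r * f' r) := by
    simp [mul_assoc]
  have hJ : (∫ r in (0 : ℝ)..b, 2 * r * (f r ^ 2 / 2))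
      = ∫ r in (0 : ℝ)..b, r * f r ^ 2 := by
    apply intervalIntegral.integral_congr
    intro r _
    ring
  -- integrability of r * f r ^ 2 on subintervals
  have hcontrf : ContinuousOn (fun r => r * f r ^ 2) (Set.Icc 0 b) :=
    continuousOn_id.mul (hfc.pow 2)
  have hint0a : IntervalIntegrable (fun r => r * f r ^ 2) volume 0 a := by
    apply ContinuousOn.intervalIntegrable
    apply hcontrf.mono
    rw [Set.uIcc_of_le ha.le]
    exact Set.Icc_subset_Icc le_rfl hab'
  have hintab : IntervalIntegrable (fun r => r * f r ^ 2) volume a b := by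
    apply ContinuousOn.intervalIntegrable
    apply hcontrf.mono
    rw [Set.uIcc_of_le hab']
    exact Set.Icc_subset_Icc ha.le le_rfl
  -- lower bound on J
  have hsplit : (∫ r in (0 : ℝ)..b, r * f r ^ 2)
      = (∫ r in (0 : ℝ)..a, r * f r ^ 2) + ∫ r in a..b, r * f r ^ 2 :=
    (intervalIntegral.integral_add_adjacent_intervals hint0a hintab).symm
  have hnn : 0 ≤ ∫ r in (0 : ℝ)..a, r * f r ^ 2 := by
    apply intervalIntegral.integral_nonneg ha.le
    intro r hr
    have : 0 ≤ f r ^ 2 := sq_nonneg _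
    exact mul_nonneg hr.1 this
  have hmono : (∫ r in a..b, r - 2 * a) ≤ ∫ r in a..b, r * f r ^ 2 := by
    apply intervalIntegral.integral_mono_on hab'
    · exact (continuousOn_id.sub continuousOn_const).intervalIntegrable_of_Icc hab'
    · exact hintab
    · intro r hr
      have hr0 : 0 < r := lt_of_lt_of_le ha hr.1
      have hax : a / r ≤ 1 := by
        rw [div_le_one hr0]; exact hr.1
      have h1 : 0 ≤ 1 - a / r := by linarith
      have hb1 : 1 - a / b ≤ 1 := by
        have : 0 ≤ a / b := div_nonneg ha.le h0b
        linarith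
      have hb0 : 0 < 1 - a / b := by
        have : a / b < 1 := by rw [div_lt_one hb]; linarith
        linarith
      have hlow' : 1 - a / r ≤ f r := by
        have := hlow r hr
        calc 1 - a / r ≤ (1 - a / r) / (1 - a / b) := by
              rw [le_div_iff₀ hb0]
              nlinarith
          _ ≤ f r := this
      have hsq : (1 - a / r) ^ 2 ≤ f r ^ 2 := by nlinarith
      have hexp : r * (1 - a / r) ^ 2 = r - 2 * a + a ^ 2 / r := by
        field_simp; ring
      have hx : 0 ≤ a ^ 2 / r := div_nonneg (sq_nonneg a) hr0.le
      nlinarith [mul_le_mul_of_nonneg_left hsq hr0.le]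
  have hcomp : (∫ r in a..b, r - 2 * a) = (b ^ 2 / 2 - a ^ 2 / 2) - 2 * a * (b - a) := by
    rw [intervalIntegral.integral_sub intervalIntegrable_id intervalIntegrable_const]
    simp [integral_id]
    ring
  -- put it together
  rw [hlhs, hibp, hfb]
  rw [hJ] at *
  have hJlb : (b ^ 2 / 2 - a ^ 2 / 2) - 2 * a * (b - a) ≤ ∫ r in (0 : ℝ)..b, r * f r ^ 2 := by
    rw [hsplit]
    rw [hcomp] at hmono
    linarith
  have haab : a * a ≤ a * b := by nlinarith
  nlinarith [sq_nonneg (f 0)]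
end

section
/- There exists a universal constant C > 0 such that the following holds. Let a, b > 0 with 2a ≤ b, and let f: [0, b] → ℝ be continuously differentiable with f ≥ 0, f(b) = 1, and f(r) ≥ (1 − a³/r³)/(1 − a³/b³) for all r ∈ [a, b]. Then ∫₀^b r² f(r) f'(r) dr ≤ C a². -/
open MeasureTheory intervalIntegral

/-- There is a universal constant `C > 0` such that for all `0 < a`,
`0 < b` with `2a ≤ b` and every continuously differentiable `f : [0,b] → ℝ` (with derivative
`f'`) satisfying `f ≥ 0`, `f(b) = 1` and `f(r) ≥ (1 − a³/r³)/(1 − a³/b³)` on `[a,b]`, one has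
`∫₀^b r² f(r) f'(r) dr ≤ C a²`. -/
theorem radial_integral_f_deriv_le_p_wave :
    ∃ C > (0 : ℝ), ∀ (a b : ℝ) (f f' : ℝ → ℝ),
      0 < a → 0 < b → 2 * a ≤ b →
      (∀ r ∈ Set.Icc (0 : ℝ) b, HasDerivAt f (f' r) r) →
      ContinuousOn f' (Set.Icc (0 : ℝ) b) →
      (∀ r ∈ Set.Icc (0 : ℝ) b, 0 ≤ f r) →
      f b = 1 →
      (∀ r ∈ Set.Icc a b, (1 - a ^ 3 / r ^ 3) / (1 - a ^ 3 / b ^ 3) ≤ f r) →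
      (∫ r in (0 : ℝ)..b, r ^ 2 * f r * f' r) ≤ C * a ^ 2 := by
  refine ⟨5/2, by norm_num, ?_⟩
  intro a b f f' ha hb hab hderiv hcont hpos hfb hlow
  have hab' : a ≤ b := by linarith
  have haltb : a < b := by linarith
  have hb0 : (0:ℝ) ≤ b := hb.le
  have huIcc : Set.uIcc (0:ℝ) b = Set.Icc 0 b := Set.uIcc_of_le hb0
  have huIcc2 : Set.uIcc a b = Set.Icc a b := Set.uIcc_of_le hab'
  have hfc : ContinuousOn f (Set.Icc 0 b) := fun r hr =>
    (hderiv r hr).continuousAt.continuousWithinAt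
  -- continuity of integrands
  have hcA : ContinuousOn (fun r : ℝ => r ^ 2 * f r * f' r) (Set.Icc 0 b) :=
    (((continuous_pow 2).continuousOn.mul hfc).mul hcont)
  have hcB : ContinuousOn (fun r : ℝ => r * (f r) ^ 2) (Set.Icc 0 b) :=
    continuous_id.continuousOn.mul (hfc.pow 2)
  have hiA : IntervalIntegrable (fun r : ℝ => r ^ 2 * f r * f' r) volume 0 b := by
    apply ContinuousOn.intervalIntegrable; rwa [huIcc]
  have hiB : IntervalIntegrable (fun r : ℝ => r * (f r) ^ 2) volume 0 b := by
    apply ContinuousOn.intervalIntegrable; rwa [huIcc]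
  -- integration by parts
  have key : (∫ r in (0:ℝ)..b, (r ^ 2 * f r * f' r + r * (f r) ^ 2)) = b ^ 2 / 2 := by
    have hF : ∀ r ∈ Set.uIcc (0:ℝ) b,
        HasDerivAt (fun r => r ^ 2 * (f r) ^ 2 / 2) (r ^ 2 * f r * f' r + r * (f r) ^ 2) r := by
      intro r hr
      rw [huIcc] at hr
      have h1 : HasDerivAt (fun r : ℝ => r ^ 2) (2 * r) r := by
        simpa using hasDerivAt_pow 2 r
      have h2 : HasDerivAt (fun r => (f r) ^ 2) (2 * f r * f' r) r := by
        simpa [mul_comm] using (hderiv r hr).fun_pow 2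
      have := (h1.fun_mul h2).div_const 2
      refine this.congr_deriv ?_
      ring
    have hInt : IntervalIntegrable (fun r : ℝ => r ^ 2 * f r * f' r + r * (f r) ^ 2)
        volume 0 b := hiA.add hiB
    have := intervalIntegral.integral_eq_sub_of_hasDerivAt hF hInt
    rw [this, hfb]
    ring
  rw [intervalIntegral.integral_add hiA hiB] at key
  -- lower bound on ∫ r f²
  have hlow2 : ∀ r ∈ Set.Icc a b, 1 - a ^ 3 / r ^ 3 ≤ f r := by
    intro r hr
    have hr0 : 0 < r := lt_of_lt_of_le ha hr.1
    have hD : 0 < 1 - a ^ 3 / b ^ 3 := by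
      have : a ^ 3 / b ^ 3 < 1 := by
        rw [div_lt_one (pow_pos hb 3)]
        exact pow_lt_pow_left₀ haltb ha.le (by norm_num)
      linarith
    have hnum : 0 ≤ 1 - a ^ 3 / r ^ 3 := by
      have : a ^ 3 / r ^ 3 ≤ 1 := by
        rw [div_le_one (pow_pos hr0 3)]
        exact pow_le_pow_left₀ ha.le hr.1 3
      linarith
    calc 1 - a ^ 3 / r ^ 3 ≤ (1 - a ^ 3 / r ^ 3) / (1 - a ^ 3 / b ^ 3) := by
          rw [le_div_iff₀ hD]
          have hD1 : 1 - a ^ 3 / b ^ 3 ≤ 1 := by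
            have : 0 ≤ a ^ 3 / b ^ 3 := by positivity
            linarith
          nlinarith
      _ ≤ f r := hlow r hr
  have hpt : ∀ r ∈ Set.Icc a b, r - 2 * a ^ 3 / r ^ 2 ≤ r * (f r) ^ 2 := by
    intro r hr
    have hr0 : 0 < r := lt_of_lt_of_le ha hr.1
    have hnum : 0 ≤ 1 - a ^ 3 / r ^ 3 := by
      have : a ^ 3 / r ^ 3 ≤ 1 := by
        rw [div_le_one (pow_pos hr0 3)]
        exact pow_le_pow_left₀ ha.le hr.1 3
      linarith
    have h2 : (1 - a ^ 3 / r ^ 3) ^ 2 ≤ (f r) ^ 2 :=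
      pow_le_pow_left₀ hnum (hlow2 r hr) 2
    have h3 : r * (1 - a ^ 3 / r ^ 3) ^ 2 ≤ r * (f r) ^ 2 :=
      mul_le_mul_of_nonneg_left h2 hr0.le
    have h4 : r * (1 - a ^ 3 / r ^ 3) ^ 2 = r - 2 * a ^ 3 / r ^ 2 + a ^ 6 / r ^ 5 := by
      field_simp
      ring
    have h5 : 0 ≤ a ^ 6 / r ^ 5 := by positivity
    linarith
  -- integrability on [a,b]
  have hsub : Set.Icc a b ⊆ Set.Icc 0 b := Set.Icc_subset_Icc ha.le le_rfl
  have hiB2 : IntervalIntegrable (fun r : ℝ => r * (f r) ^ 2) volume a b := by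
    apply ContinuousOn.intervalIntegrable; rw [huIcc2]; exact hcB.mono hsub
  have hiB1 : IntervalIntegrable (fun r : ℝ => r * (f r) ^ 2) volume 0 a := by
    apply ContinuousOn.intervalIntegrable
    rw [Set.uIcc_of_le ha.le]
    exact hcB.mono (Set.Icc_subset_Icc le_rfl hab')
  have hcG : ContinuousOn (fun r : ℝ => r - 2 * a ^ 3 / r ^ 2) (Set.Icc a b) := by
    apply ContinuousOn.sub continuous_id.continuousOn
    apply ContinuousOn.div continuousOn_const (continuous_pow 2).continuousOn
    intro r hr
    have hr0 : 0 < r := lt_of_lt_of_le ha hr.1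
    positivity
  have hiG : IntervalIntegrable (fun r : ℝ => r - 2 * a ^ 3 / r ^ 2) volume a b := by
    apply ContinuousOn.intervalIntegrable; rwa [huIcc2]
  -- compute ∫_a^b (r - 2a³/r²)
  have hJ : (∫ r in a..b, (r - 2 * a ^ 3 / r ^ 2)) =
      (b ^ 2 / 2 + 2 * a ^ 3 / b) - (a ^ 2 / 2 + 2 * a ^ 3 / a) := by
    have hH : ∀ r ∈ Set.uIcc a b,
        HasDerivAt (fun r : ℝ => r ^ 2 / 2 + 2 * a ^ 3 / r) (r - 2 * a ^ 3 / r ^ 2) r := by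
      intro r hr
      rw [huIcc2] at hr
      have hr0 : 0 < r := lt_of_lt_of_le ha hr.1
      have h1 : HasDerivAt (fun r : ℝ => r ^ 2 / 2) r r := by
        simpa using (hasDerivAt_pow 2 r).div_const 2
      have h2 : HasDerivAt (fun r : ℝ => 2 * a ^ 3 / r) (2 * a ^ 3 * (-(r ^ 2)⁻¹)) r := by
        simpa [div_eq_mul_inv] using (hasDerivAt_inv hr0.ne').const_mul (2 * a ^ 3)
      have := h1.fun_add h2
      refine this.congr_deriv ?_
      ring
    have := intervalIntegral.integral_eq_sub_of_hasDerivAt hH hiG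
    rw [this]
  have hmono : (∫ r in a..b, (r - 2 * a ^ 3 / r ^ 2)) ≤ ∫ r in a..b, r * (f r) ^ 2 :=
    intervalIntegral.integral_mono_on hab' hiG hiB2 hpt
  have hnn : (0:ℝ) ≤ ∫ r in (0:ℝ)..a, r * (f r) ^ 2 := by
    apply intervalIntegral.integral_nonneg ha.le
    intro r hr
    exact mul_nonneg hr.1 (sq_nonneg _)
  have hsplit : (∫ r in (0:ℝ)..a, r * (f r) ^ 2) + (∫ r in a..b, r * (f r) ^ 2)
      = ∫ r in (0:ℝ)..b, r * (f r) ^ 2 :=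
    intervalIntegral.integral_add_adjacent_intervals hiB1 hiB2
  have hBbound : b ^ 2 / 2 - 5 / 2 * a ^ 2 ≤ ∫ r in (0:ℝ)..b, r * (f r) ^ 2 := by
    rw [← hsplit]
    have : (b ^ 2 / 2 + 2 * a ^ 3 / b) - (a ^ 2 / 2 + 2 * a ^ 3 / a)
        ≤ ∫ r in a..b, r * (f r) ^ 2 := hJ ▸ hmono
    have h2ab : 0 ≤ 2 * a ^ 3 / b := by positivity
    have haa : 2 * a ^ 3 / a = 2 * a ^ 2 := by
      field_simp
    nlinarith
  linarith
end
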